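/- Let {z_j}_{j=1}^n be n distinct points in the open unit disk 𝔻 ⊂ ℂ. Then there exists a boundary point ω₀ ∈ ∂𝔻 and a collection of open convex sets {C_j}_{j=1}^n covering 𝔻 such that each C_j contains z_j and no other point z_k (k ≠ j), and ω₀ is an accumulation point of every C_j. -/

import Mathlib

open Complex Finset Filter

/-- sin is positive iff the angle is positive, within `(-π, π)`. -/
lemma aux_sin_pos_iff {x : ℝ} (h1 : -Real.pi < x) (h2 : x < Real.pi) :
    0 < Real.sin x ↔ 0 < x := by
  constructor
  · intro h
    by_contra hx
    push_neg at hx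
    have := Real.sin_nonpos_of_nonpos_of_neg_pi_le hx h1.le
    linarith
  · intro h
    exact Real.sin_pos_of_pos_of_lt_pi h h2

lemma aux_sin_neg_iff {x : ℝ} (h1 : -Real.pi < x) (h2 : x < Real.pi) :
    Real.sin x < 0 ↔ x < 0 := by
  have := aux_sin_pos_iff (x := -x) (by linarith) (by linarith)
  simp only [Real.sin_neg] at this
  constructor
  · intro h; linarith [this.1 (by linarith)]
  · intro h; linarith [this.2 (by linarith)]

lemma aux_arg_pos {u : ℂ} (hu : 0 < u.im) : 0 < u.arg := by
  rcases lt_or_eq_of_le (Complex.arg_nonneg_iff.2 hu.le) with h | h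
  · exact h
  · exfalso
    have := Complex.arg_eq_zero_iff.1 h.symm
    linarith [this.2]

lemma aux_arg_lt_pi {u : ℂ} (hu : 0 < u.im) : u.arg < Real.pi := by
  rcases lt_or_eq_of_le (Complex.arg_le_pi u) with h | h
  · exact h
  · exfalso
    have := Complex.arg_eq_pi_iff.1 h
    linarith [this.2]

lemma aux_im_decomp (u : ℂ) (a : ℝ) :
    (u * Complex.exp (-(a:ℂ) * Complex.I)).im = ‖u‖ * Real.sin (u.arg - a) := by
  have h : u * Complex.exp (-(a:ℂ) * Complex.I)
      = ((‖u‖ : ℝ) : ℂ) * Complex.exp (((u.arg - a : ℝ) : ℂ) * Complex.I) := by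
    conv_lhs => rw [← Complex.norm_mul_exp_arg_mul_I u]
    rw [mul_assoc, ← Complex.exp_add]
    congr 1
    push_cast
    ring
  rw [h]
  simp only [Complex.mul_im, Complex.ofReal_re, Complex.ofReal_im,
    Complex.exp_ofReal_mul_I_im, Complex.exp_ofReal_mul_I_re, zero_mul, add_zero]

/-- Sector lemma, lower bound. -/
lemma aux_sector_lower {u : ℂ} (hu : 0 < u.im) {a : ℝ} (ha0 : 0 ≤ a) (haπ : a < Real.pi) :
    (0 < (u * Complex.exp (-(a:ℂ) * Complex.I)).im) ↔ a < u.arg := by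
  have h1 := aux_arg_pos hu
  have h2 := aux_arg_lt_pi hu
  have habs : 0 < ‖u‖ := by
    apply norm_pos_iff.mpr
    intro h; rw [h] at hu; simp at hu
  rw [aux_im_decomp]
  rw [mul_pos_iff_of_pos_left habs]
  rw [aux_sin_pos_iff (by linarith) (by linarith)]
  constructor <;> intro <;> linarith

/-- Sector lemma, upper bound. -/
lemma aux_sector_upper {u : ℂ} (hu : 0 < u.im) {b : ℝ} (hb0 : 0 < b) (hbπ : b ≤ Real.pi) :
    ((u * Complex.exp (-(b:ℂ) * Complex.I)).im < 0) ↔ u.arg < b := by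
  have h1 := aux_arg_pos hu
  have h2 := aux_arg_lt_pi hu
  have habs : 0 < ‖u‖ := by
    apply norm_pos_iff.mpr
    intro h; rw [h] at hu; simp at hu
  rw [aux_im_decomp]
  constructor
  · intro h
    have hsin : Real.sin (u.arg - b) < 0 := by
      nlinarith
    have := (aux_sin_neg_iff (x := u.arg - b) (by linarith) (by linarith)).1 hsin
    linarith
  · intro h
    have hsin : Real.sin (u.arg - b) < 0 :=
      (aux_sin_neg_iff (x := u.arg - b) (by linarith) (by linarith)).2 (by linarith)
    nlinarith

/-- A real quadratic with nonzero leading coefficient has finitely many roots. -/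
lemma aux_quad_finite {A B C : ℝ} (hA : A ≠ 0) : {t : ℝ | A*t^2 + B*t + C = 0}.Finite := by
  rcases Set.eq_empty_or_nonempty {t : ℝ | A*t^2 + B*t + C = 0} with h | ⟨t₀, ht₀⟩
  · rw [h]; exact Set.finite_empty
  · apply Set.Finite.subset ((Set.finite_singleton ((-B/A) - t₀)).insert t₀)
    intro s hs
    simp only [Set.mem_setOf_eq] at hs ht₀
    by_cases hst : s = t₀
    · exact Set.mem_insert_iff.2 (Or.inl hst)
    · refine Set.mem_insert_iff.2 (Or.inr ?_)
      have key : (s - t₀) * (A*(s+t₀)+B) = 0 := by linear_combination hs - ht₀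
      have h2 : A*(s+t₀)+B = 0 := by
        rcases mul_eq_zero.1 key with h | h
        · exact absurd (by linarith) hst
        · exact h
      have : s = -B/A - t₀ := by field_simp; linarith
      simp [this]

/-- The unit circle is infinite. -/
lemma aux_sphere_infinite : (Metric.sphere (0:ℂ) 1).Infinite := by
  have hIoo : (Set.Ioo (-1:ℝ) 1).Infinite :=
    Set.infinite_coe_iff.mp (Set.Ioo.infinite (by norm_num))
  set f : ℝ → ℂ := fun t => (t : ℂ) + (Real.sqrt (1 - t^2) : ℂ) * Complex.I with hf
  have hinj : Set.InjOn f (Set.Ioo (-1:ℝ) 1) := by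
    intro s _ t _ h
    have : (f s).re = (f t).re := by rw [h]
    simpa [hf] using this
  have himg : f '' (Set.Ioo (-1:ℝ) 1) ⊆ Metric.sphere (0:ℂ) 1 := by
    rintro _ ⟨t, ht, rfl⟩
    rw [mem_sphere_zero_iff_norm]
    have h1 : (0:ℝ) ≤ 1 - t^2 := by
      simp only [Set.mem_Ioo] at ht
      nlinarith [ht.1, ht.2]
    have : Complex.normSq (f t) = 1 := by
      simp only [hf, Complex.normSq_apply]
      simp only [Complex.add_re, Complex.add_im, Complex.ofReal_re, Complex.ofReal_im,
        Complex.mul_re, Complex.mul_im, Complex.I_re, Complex.I_im]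
      have := Real.mul_self_sqrt h1
      nlinarith [this]
    rw [Complex.norm_def, this, Real.sqrt_one]
  exact Set.Infinite.mono himg (hIoo.image hinj)

/-- There is a point on the unit circle not on any line through two of the `z j`. -/
lemma aux_exists_good (n : ℕ) (z : Fin n → ℂ) (hinj : Function.Injective z) :
    ∃ ω₀ : ℂ, ‖ω₀‖ = 1 ∧ ∀ j k, j ≠ k → ∀ t : ℝ, ω₀ ≠ z j + t • (z k - z j) := by
  set Bad : Set ℂ := ⋃ p : Fin n × Fin n,
    {ω | ω ∈ Metric.sphere (0:ℂ) 1 ∧ p.1 ≠ p.2 ∧ ∃ t : ℝ, ω = z p.1 + t • (z p.2 - z p.1)}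
    with hBad
  have hfin : Bad.Finite := by
    apply Set.finite_iUnion
    rintro ⟨j, k⟩
    by_cases hjk : j = k
    · convert Set.finite_empty
      ext ω; simp [hjk]
    · set d : ℂ := z k - z j with hd
      have hdne : d ≠ 0 := sub_ne_zero.2 fun h => hjk (hinj h).symm
      have hsub : {ω | ω ∈ Metric.sphere (0:ℂ) 1 ∧ j ≠ k ∧ ∃ t : ℝ, ω = z j + t • d}
          ⊆ (fun t : ℝ => z j + t • d) '' {t : ℝ |
            Complex.normSq d * t^2 + 2*((z j).re*d.re + (z j).im*d.im)*t
              + (Complex.normSq (z j) - 1) = 0} := by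
        rintro ω ⟨hω, -, t, rfl⟩
        refine ⟨t, ?_, rfl⟩
        rw [mem_sphere_zero_iff_norm] at hω
        have h2 : Complex.normSq (z j + t • d) = 1 := by
          rw [← Complex.sq_norm, hω]; norm_num
        simp only [Set.mem_setOf_eq]
        simp only [Complex.normSq_apply, Complex.add_re, Complex.add_im,
          Complex.smul_re, Complex.smul_im, smul_eq_mul] at h2 ⊢
        nlinarith [h2]
      refine Set.Finite.subset (Set.Finite.image _ (aux_quad_finite ?_)) hsub
      simpa using hdne
  obtain ⟨ω₀, hω₀⟩ := (aux_sphere_infinite.diff hfin).nonempty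
  refine ⟨ω₀, mem_sphere_zero_iff_norm.1 hω₀.1, ?_⟩
  intro j k hjk t heq
  apply hω₀.2
  rw [hBad]
  exact Set.mem_iUnion.2 ⟨⟨j, k⟩, hω₀.1, hjk, t, heq⟩

lemma aux_convex_half_gt (ω₀ k : ℂ) : Convex ℝ {w : ℂ | 0 < ((w - ω₀) * k).im} := by
  have : {w : ℂ | 0 < ((w - ω₀) * k).im} = {w : ℂ | (ω₀ * k).im < (w * k).im} := by
    ext w
    simp [sub_mul, Complex.sub_im, sub_pos]
  rw [this]
  exact convex_halfSpace_gt ⟨fun x y => by simp [add_mul], fun c x => by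
    rw [smul_mul_assoc, Complex.smul_im]⟩ _

lemma aux_convex_half_lt (ω₀ k : ℂ) : Convex ℝ {w : ℂ | ((w - ω₀) * k).im < 0} := by
  have : {w : ℂ | ((w - ω₀) * k).im < 0} = {w : ℂ | (w * k).im < (ω₀ * k).im} := by
    ext w
    simp [sub_mul, Complex.sub_im, sub_neg]
  rw [this]
  exact convex_halfSpace_lt ⟨fun x y => by simp [add_mul], fun c x => by
    rw [smul_mul_assoc, Complex.smul_im]⟩ _

/-- geometric covering lemma.  Let `z₁, …, z_n` (`n ≥ 1`) be distinct
points of the open unit disk `𝔻 ⊆ ℂ`.  Then there exist a boundary point `ω₀ ∈ ∂𝔻`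
(`‖ω₀‖ = 1`) and open convex sets `C₁, …, C_n` covering `𝔻` such that each `C_j` contains
`z_j` and no other point `z_k` (`k ≠ j`), and `ω₀` is an accumulation point of every `C_j`. -/
theorem stmt10 (n : ℕ) (hn : 1 ≤ n) (z : Fin n → ℂ) (hinj : Function.Injective z)
    (hzball : ∀ j, z j ∈ Metric.ball (0 : ℂ) 1) :
    ∃ ω₀ : ℂ, ‖ω₀‖ = 1 ∧
      ∃ C : Fin n → Set ℂ,
        (∀ j, IsOpen (C j)) ∧ (∀ j, Convex ℝ (C j)) ∧
        Metric.ball (0 : ℂ) 1 ⊆ ⋃ j, C j ∧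
        (∀ j k, z k ∈ C j ↔ k = j) ∧
        (∀ j, ω₀ ∈ closure (C j \ {ω₀})) := by
  classical
  have hne : Nonempty (Fin n) := ⟨⟨0, hn⟩⟩
  obtain ⟨ω₀, hω, hline⟩ := aux_exists_good n z hinj
  refine ⟨ω₀, hω, ?_⟩
  set c : ℂ := (starRingEnd ℂ) (Complex.I * ω₀) with hc
  set u : ℂ → ℂ := fun w => (w - ω₀) * c with hu
  have hcne : c ≠ 0 := by
    intro h
    have h2 : Complex.I * ω₀ = 0 := by
      have h3 := congrArg (starRingEnd ℂ) h
      rw [hc] at h3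
      simpa using h3
    rcases mul_eq_zero.1 h2 with h' | h'
    · exact Complex.I_ne_zero h'
    · rw [h'] at hω; simp at hω
  have hnsω : Complex.normSq ω₀ = 1 := by
    rw [Complex.normSq_eq_norm_sq, hω]; norm_num
  -- imaginary part of u is positive on the ball
  have him : ∀ w : ℂ, ‖w‖ < 1 → 0 < (u w).im := by
    intro w hw
    have hns : Complex.normSq w < 1 := by
      rw [Complex.normSq_eq_norm_sq]
      nlinarith [norm_nonneg w]
    simp only [hu, hc, Complex.mul_im, Complex.sub_re, Complex.sub_im,
      Complex.conj_re, Complex.conj_im, Complex.mul_re, Complex.mul_im,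
      Complex.I_re, Complex.I_im, Complex.normSq_apply] at hns hnsω ⊢
    nlinarith [sq_nonneg (w.re - ω₀.re), sq_nonneg (w.im - ω₀.im)]
  have hz1 : ∀ j, ‖z j‖ < 1 := fun j => by
    simpa [Metric.mem_ball, dist_zero_right] using hzball j
  have himz : ∀ j, 0 < (u (z j)).im := fun j => him _ (hz1 j)
  set φ : Fin n → ℝ := fun j => (u (z j)).arg with hφ
  have hφ0 : ∀ j, 0 < φ j := fun j => aux_arg_pos (himz j)
  have hφπ : ∀ j, φ j < Real.pi := fun j => aux_arg_lt_pi (himz j)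
  -- the angles are pairwise distinct
  have hφinj : Function.Injective φ := by
    intro j k hjk
    by_contra hne'
    have hzne : z j ≠ z k := fun h => hne' (hinj h)
    set rj : ℝ := ‖u (z j)‖ with hrj
    set rk : ℝ := ‖u (z k)‖ with hrk
    have hrjpos : 0 < rj := by
      apply norm_pos_iff.mpr; intro h
      have := himz j; rw [h] at this; simp at this
    have hrkpos : 0 < rk := by
      apply norm_pos_iff.mpr; intro h
      have := himz k; rw [h] at this; simp at this
    have hkey : u (z j) * (rk : ℂ) = u (z k) * (rj : ℂ) := by
      conv_lhs => rw [← Complex.norm_mul_exp_arg_mul_I (u (z j))]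
      conv_rhs => rw [← Complex.norm_mul_exp_arg_mul_I (u (z k))]
      have : (u (z j)).arg = (u (z k)).arg := hjk
      rw [this, ← hrj, ← hrk]
      ring
    -- cancel c
    have hkey2 : (z j - ω₀) * (rk : ℂ) = (z k - ω₀) * (rj : ℂ) := by
      apply mul_right_cancel₀ hcne
      have e1 : ((z j - ω₀) * (rk:ℂ)) * c = u (z j) * (rk:ℂ) := by
        simp only [hu]; ring
      have e2 : ((z k - ω₀) * (rj:ℂ)) * c = u (z k) * (rj:ℂ) := by
        simp only [hu]; ring
      rw [e1, e2, hkey]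
    have hrne : rj ≠ rk := by
      intro h
      rw [h] at hkey2
      have : (z j - ω₀) = (z k - ω₀) := by
        have hrkC : (rk : ℂ) ≠ 0 := by exact_mod_cast hrkpos.ne'
        exact mul_right_cancel₀ hrkC hkey2
      exact hzne (by linear_combination this)
    -- ω₀ lies on the line through z j and z k
    apply hline j k (fun h => hzne (congrArg z h)) (rj / (rj - rk))
    have hd : (rj : ℂ) - (rk : ℂ) ≠ 0 := by
      intro h
      apply hrne
      exact_mod_cast sub_eq_zero.1 h
    rw [Complex.real_smul]
    push_cast
    field_simp
    linear_combination hkey2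
  -- neighbour angles
  set S : Fin n → Finset ℝ := fun j =>
    insert 0 ((Finset.univ.filter fun k => φ k < φ j).image φ) with hS
  set T : Fin n → Finset ℝ := fun j =>
    insert Real.pi ((Finset.univ.filter fun k => φ j < φ k).image φ) with hT
  have hSne : ∀ j, (S j).Nonempty := fun j => ⟨0, Finset.mem_insert_self _ _⟩
  have hTne : ∀ j, (T j).Nonempty := fun j => ⟨Real.pi, Finset.mem_insert_self _ _⟩
  set a : Fin n → ℝ := fun j => (S j).max' (hSne j) with ha
  set b : Fin n → ℝ := fun j => (T j).min' (hTne j) with hb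
  have haφ : ∀ j, a j < φ j := by
    intro j
    rw [ha, Finset.max'_lt_iff]
    intro y hy
    simp only [hS, Finset.mem_insert, Finset.mem_image, Finset.mem_filter] at hy
    rcases hy with rfl | ⟨k, ⟨-, hk⟩, rfl⟩
    · exact hφ0 j
    · exact hk
  have hφb : ∀ j, φ j < b j := by
    intro j
    rw [hb, Finset.lt_min'_iff]
    intro y hy
    simp only [hT, Finset.mem_insert, Finset.mem_image, Finset.mem_filter] at hy
    rcases hy with rfl | ⟨k, ⟨-, hk⟩, rfl⟩
    · exact hφπ j
    · exact hk
  have ha0 : ∀ j, 0 ≤ a j := fun j => Finset.le_max' _ 0 (Finset.mem_insert_self _ _)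
  have haπ : ∀ j, a j < Real.pi := fun j => (haφ j).trans (hφπ j)
  have hb0 : ∀ j, 0 < b j := fun j => (hφ0 j).trans (hφb j)
  have hbπ : ∀ j, b j ≤ Real.pi := fun j => Finset.min'_le _ _ (Finset.mem_insert_self _ _)
  have hka : ∀ j k, φ k < φ j → φ k ≤ a j := by
    intro j k hk
    apply Finset.le_max'
    simp only [hS, Finset.mem_insert, Finset.mem_image, Finset.mem_filter]
    exact Or.inr ⟨k, ⟨Finset.mem_univ _, hk⟩, rfl⟩
  have hkb : ∀ j k, φ j < φ k → b j ≤ φ k := by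
    intro j k hk
    apply Finset.min'_le
    simp only [hT, Finset.mem_insert, Finset.mem_image, Finset.mem_filter]
    exact Or.inr ⟨k, ⟨Finset.mem_univ _, hk⟩, rfl⟩
  -- the sets
  set C : Fin n → Set ℂ := fun j =>
    Metric.ball (0:ℂ) 1
      ∩ {w : ℂ | 0 < ((w - ω₀) * (c * Complex.exp (-(a j : ℂ) * Complex.I))).im}
      ∩ {w : ℂ | ((w - ω₀) * (c * Complex.exp (-(b j : ℂ) * Complex.I))).im < 0} with hC
  -- membership characterization
  have hmem : ∀ j w, w ∈ C j ↔
      ‖w‖ < 1 ∧ a j < (u w).arg ∧ (u w).arg < b j := by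
    intro j w
    rw [hC]
    simp only [Set.mem_inter_iff, Metric.mem_ball, dist_zero_right, Set.mem_setOf_eq]
    constructor
    · rintro ⟨⟨hw, h1⟩, h2⟩
      have himw := him w hw
      refine ⟨hw, ?_, ?_⟩
      · rw [← aux_sector_lower himw (ha0 j) (haπ j)]
        rw [← mul_assoc] at h1; exact h1
      · rw [← aux_sector_upper himw (hb0 j) (hbπ j)]
        rw [← mul_assoc] at h2; exact h2
    · rintro ⟨hw, h1, h2⟩
      have himw := him w hw
      refine ⟨⟨hw, ?_⟩, ?_⟩
      · rw [← mul_assoc]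
        exact (aux_sector_lower himw (ha0 j) (haπ j)).2 h1
      · rw [← mul_assoc]
        exact (aux_sector_upper himw (hb0 j) (hbπ j)).2 h2
  refine ⟨C, ?_, ?_, ?_, ?_, ?_⟩
  · -- open
    intro j
    rw [hC]
    apply IsOpen.inter
    apply IsOpen.inter
    · exact Metric.isOpen_ball
    · exact isOpen_lt continuous_const (by fun_prop)
    · exact isOpen_lt (by fun_prop) continuous_const
  · -- convex
    intro j
    rw [hC]
    exact ((convex_ball _ _).inter (aux_convex_half_gt _ _)).inter (aux_convex_half_lt _ _)
  · -- covering
    intro w hw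
    rw [Metric.mem_ball, dist_zero_right] at hw
    set t : ℝ := (u w).arg with htdef
    have himw := him w hw
    have ht0 : 0 < t := aux_arg_pos himw
    have htπ : t < Real.pi := aux_arg_lt_pi himw
    rcases (Finset.univ.filter fun k => φ k ≤ t).eq_empty_or_nonempty with hF | hF
    · -- all angles above t; use the minimal one
      have hall : ∀ k, t < φ k := by
        intro k
        by_contra h
        push_neg at h
        have : k ∈ Finset.univ.filter fun k => φ k ≤ t := by
          simp [h]
        rw [hF] at this; simp at this
      obtain ⟨j, -, hjmin⟩ := Finset.exists_min_image Finset.univ φ Finset.univ_nonempty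
      refine Set.mem_iUnion.2 ⟨j, (hmem j w).2 ⟨hw, ?_, ?_⟩⟩
      · -- a j ≤ 0 < t
        have : a j ≤ 0 := by
          apply Finset.max'_le
          intro y hy
          simp only [hS, Finset.mem_insert, Finset.mem_image, Finset.mem_filter] at hy
          rcases hy with rfl | ⟨k, ⟨-, hk⟩, rfl⟩
          · exact le_refl 0
          · exact absurd hk (not_lt.2 (hjmin k (Finset.mem_univ k)))
        linarith
      · rw [hb, Finset.lt_min'_iff]
        intro y hy
        simp only [hT, Finset.mem_insert, Finset.mem_image, Finset.mem_filter] at hy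
        rcases hy with rfl | ⟨k, ⟨-, hk⟩, rfl⟩
        · exact htπ
        · exact hall k
    · -- some angle ≤ t; use the maximal such
      obtain ⟨j, hjF, hjmax⟩ := Finset.exists_max_image _ φ hF
      simp only [Finset.mem_filter] at hjF
      refine Set.mem_iUnion.2 ⟨j, (hmem j w).2 ⟨hw, ?_, ?_⟩⟩
      · linarith [haφ j, hjF.2]
      · rw [hb, Finset.lt_min'_iff]
        intro y hy
        simp only [hT, Finset.mem_insert, Finset.mem_image, Finset.mem_filter] at hy
        rcases hy with rfl | ⟨k, ⟨-, hk⟩, rfl⟩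
        · exact htπ
        · -- φ j < φ k ⇒ k not in F ⇒ t < φ k
          by_contra h
          push_neg at h
          have : k ∈ Finset.univ.filter fun k => φ k ≤ t := by simp [h, htdef]
          have := hjmax k this
          linarith
  · -- z k ∈ C j ↔ k = j
    intro j k
    constructor
    · intro hk
      rw [hmem] at hk
      obtain ⟨-, h1, h2⟩ := hk
      by_contra hne'
      rcases lt_trichotomy (φ k) (φ j) with h | h | h
      · have := hka j k h
        change a j < φ k at h1
        linarith
      · exact hne' (hφinj h)
      · have := hkb j k h
        change φ k < b j at h2
        linarith
    · rintro rfl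
      rw [hmem]
      exact ⟨hz1 k, haφ k, hφb k⟩
  · -- accumulation
    intro j
    rw [mem_closure_iff_seq_limit]
    refine ⟨fun m => ω₀ + ((1:ℝ)/(m+1)) • (z j - ω₀), ?_, ?_⟩
    · intro m
      set s : ℝ := (1:ℝ)/(m+1) with hs
      have hs0 : 0 < s := by positivity
      have hs1 : s ≤ 1 := by
        rw [hs, div_le_one (by positivity)]
        linarith [Nat.cast_nonneg (α := ℝ) m]
      have hnorm : ‖ω₀ + s • (z j - ω₀)‖ < 1 := by
        have heq : ω₀ + s • (z j - ω₀) = ((1 - s : ℝ) : ℂ) * ω₀ + (s : ℂ) * z j := by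
          rw [Complex.real_smul]; push_cast; ring
        rw [heq]
        have e1 : ‖((1 - s : ℝ) : ℂ) * ω₀‖ = 1 - s := by
          rw [norm_mul, Complex.norm_real, Real.norm_eq_abs,
            _root_.abs_of_nonneg (by linarith : (0:ℝ) ≤ 1 - s), hω, mul_one]
        have e2 : ‖((s:ℝ) : ℂ) * z j‖ = s * ‖z j‖ := by
          rw [norm_mul, Complex.norm_real, Real.norm_eq_abs, _root_.abs_of_nonneg hs0.le]
        have e3 := norm_add_le (((1 - s : ℝ) : ℂ) * ω₀) (((s:ℝ) : ℂ) * z j)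
        rw [e1, e2] at e3
        nlinarith [hz1 j]
      constructor
      · rw [hmem]
        have hueq : u (ω₀ + s • (z j - ω₀)) = (s : ℂ) * u (z j) := by
          simp only [hu]
          rw [Complex.real_smul]
          ring
        have hzj := (hmem j (z j)).1 ((by
          rw [hmem]; exact ⟨hz1 j, haφ j, hφb j⟩ : z j ∈ C j))
        refine ⟨hnorm, ?_, ?_⟩
        · rw [hueq]
          have : ((s:ℂ) * u (z j)).arg = (u (z j)).arg := by
            rw [Complex.arg_real_mul _ hs0]
          rw [this]; exact haφ j
        · rw [hueq, Complex.arg_real_mul _ hs0]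
          exact hφb j
      · -- not ω₀
        simp only [Set.mem_singleton_iff]
        intro h
        rw [h] at hnorm
        rw [hω] at hnorm
        linarith
    · -- tendsto
      have h1 : Filter.Tendsto (fun m : ℕ => (1:ℝ)/(m+1)) atTop (nhds 0) :=
        tendsto_one_div_add_atTop_nhds_zero_nat
      have h2 := (h1.smul_const (z j - ω₀)).const_add ω₀
      simpa using h2
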